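/- Regard ℂⁿ as a real inner product space with inner product ⟪u, v⟫ = Re⟨u, v⟩. Let X = ⋂_{i=1}^N {x ∈ ℂⁿ : ⟪x, nᵢ⟫ ≤ cᵢ} be a convex polytope, let y ∈ X with active index set A(y) = {i : ⟪y, nᵢ⟫ = cᵢ}, and let i₀ ∈ A(y). Suppose v satisfies v ∈ T_y⁺X and −I·v ∈ N_y⁺X (where I·v denotes multiplication of v by the imaginary unit), and suppose ⟪v, n_{i₀}⟫ = 0 while ⟪v, nⱼ⟫ < 0 for every j ∈ A(y) with j ≠ i₀. Then there exists a ≥ 0 with −I·v = a·n_{i₀}; moreover a > 0 if v ≠ 0. (Point form of Lemma 3.6: a vector of the Reeb cone lying in the interior of the tangent cone of a (2n−1)-face E is a positive multiple of I·ν_E.) -/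

import Mathlib

open Topology


/-- The real inner product `⟪u, v⟫ = Re⟨u, v⟩` on `ℂⁿ`. -/
noncomputable def rInner {n : ℕ} (u v : EuclideanSpace ℂ (Fin n)) : ℝ :=
  (inner ℂ u v : ℂ).re

/-- The tangent cone `T_y⁺X` in `ℂⁿ` (with real scalars). -/
def tangentConePlusC {n : ℕ} (X : Set (EuclideanSpace ℂ (Fin n)))
    (y : EuclideanSpace ℂ (Fin n)) : Set (EuclideanSpace ℂ (Fin n)) :=
  closure {v | ∃ ε : ℝ, 0 < ε ∧ y + ε • v ∈ X}

/-- The positive normal cone `N_y⁺X` in `ℂⁿ`, with respect to the real inner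
product. -/
noncomputable def normalConePlusC {n : ℕ} (X : Set (EuclideanSpace ℂ (Fin n)))
    (y : EuclideanSpace ℂ (Fin n)) : Set (EuclideanSpace ℂ (Fin n)) :=
  {v | ∀ x ∈ X, rInner (x - y) v ≤ 0}

section helpers

variable {n : ℕ}

lemma rInner_add_left (u v w : EuclideanSpace ℂ (Fin n)) :
    rInner (u + v) w = rInner u w + rInner v w := by
  simp [rInner, inner_add_left]

lemma rInner_smul_left (r : ℝ) (u w : EuclideanSpace ℂ (Fin n)) :
    rInner (r • u) w = r * rInner u w := by
  rw [show r • u = (r : ℂ) • u from rfl]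
  simp [rInner, inner_smul_real_left, Complex.smul_re, Finset.mul_sum, mul_add, mul_assoc]

lemma rInner_neg_left (u w : EuclideanSpace ℂ (Fin n)) :
    rInner (-u) w = -rInner u w := by
  simp [rInner, inner_neg_left]

lemma rInner_sub_left (u v w : EuclideanSpace ℂ (Fin n)) :
    rInner (u - v) w = rInner u w - rInner v w := by
  rw [sub_eq_add_neg, rInner_add_left, rInner_neg_left, sub_eq_add_neg]

lemma rInner_comm (u w : EuclideanSpace ℂ (Fin n)) : rInner u w = rInner w u := by
  rw [rInner, rInner, ← inner_conj_symm u w, Complex.conj_re]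

lemma rInner_self (u : EuclideanSpace ℂ (Fin n)) : rInner u u = ‖u‖ ^ 2 :=
  inner_self_eq_norm_sq (𝕜 := ℂ) u

lemma aux_nonpos {A B : ℝ} (h : ∀ t : ℝ, 0 < t → A + t * B ≤ 0) : A ≤ 0 := by
  by_contra h'
  push_neg at h'
  rcases le_or_gt 0 B with hB | hB
  · nlinarith [h 1 one_pos]
  · have h2 : (0 : ℝ) < -2 * B := by linarith
    have ht : (0 : ℝ) < A / (-2 * B) := div_pos h' h2
    have h3 := h _ ht
    have h4 : A / (-2 * B) * B = -A / 2 := by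
      field_simp [hB.ne]
    rw [h4] at h3
    linarith

end helpers


/-- Lemma 3.6 (point form): let `X = ⋂ i, {x ∈ ℂⁿ : ⟪x, nᵢ⟫ ≤ cᵢ}` be a convex
polytope, `y ∈ X`, and `i₀` an active index.  If `v` lies in the Reeb cone at `y`
(`v ∈ T_y⁺X` and `−I·v ∈ N_y⁺X`), `⟪v, n_{i₀}⟫ = 0`, and `⟪v, nⱼ⟫ < 0` for every
other active index `j`, then `−I·v = a·n_{i₀}` for some `a ≥ 0`, with `a > 0`
when `v ≠ 0`. -/
theorem reebCone_interior_tangentCone {n N : ℕ}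
    (nv : Fin N → EuclideanSpace ℂ (Fin n)) (c : Fin N → ℝ)
    (hn : ∀ i, nv i ≠ 0)
    (X : Set (EuclideanSpace ℂ (Fin n)))
    (hX : X = ⋂ i, {x | rInner x (nv i) ≤ c i})
    (hcomp : IsCompact X)
    (y : EuclideanSpace ℂ (Fin n)) (hy : y ∈ X)
    (i₀ : Fin N) (hi₀ : rInner y (nv i₀) = c i₀)
    (v : EuclideanSpace ℂ (Fin n))
    (hvT : v ∈ tangentConePlusC X y)
    (hvN : -(Complex.I • v) ∈ normalConePlusC X y)
    (hvi₀ : rInner v (nv i₀) = 0)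
    (hvj : ∀ j : Fin N, rInner y (nv j) = c j → j ≠ i₀ → rInner v (nv j) < 0) :
    ∃ a : ℝ, 0 ≤ a ∧ -(Complex.I • v) = a • nv i₀ ∧ (v ≠ 0 → 0 < a) := by
  classical
  set w : EuclideanSpace ℂ (Fin n) := -(Complex.I • v) with hw_def
  have hw : ∀ x ∈ X, rInner (x - y) w ≤ 0 := hvN
  have hmem : ∀ x : EuclideanSpace ℂ (Fin n),
      (∀ j, rInner x (nv j) ≤ c j) → x ∈ X := by
    intro x hx
    rw [hX, Set.mem_iInter]
    exact fun j => hx j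
  have hyy : ∀ j, rInner y (nv j) ≤ c j := by
    rw [hX, Set.mem_iInter] at hy
    exact fun j => hy j
  have hnpos : (0 : ℝ) < ‖nv i₀‖ ^ 2 := pow_pos (norm_pos_iff.mpr (hn i₀)) 2
  -- Step A
  have hA : ∀ u : EuclideanSpace ℂ (Fin n),
      (∀ j, rInner y (nv j) = c j → rInner u (nv j) < 0) → rInner u w ≤ 0 := by
    intro u hu
    have hev : ∀ᶠ ε in nhdsWithin (0 : ℝ) (Set.Ioi 0),
        ∀ j, rInner y (nv j) + ε * rInner u (nv j) ≤ c j := by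
      rw [Filter.eventually_all]
      intro j
      rcases eq_or_lt_of_le (hyy j) with hj | hj
      · have hlt := hu j hj
        filter_upwards [self_mem_nhdsWithin] with ε hε
        have : ε * rInner u (nv j) < 0 := mul_neg_of_pos_of_neg hε hlt
        linarith [hj.le]
      · have hten : Filter.Tendsto
            (fun ε : ℝ => rInner y (nv j) + ε * rInner u (nv j))
            (nhdsWithin (0 : ℝ) (Set.Ioi 0))
            (𝓝 (rInner y (nv j) + 0 * rInner u (nv j))) :=
          ((continuous_const.add (continuous_id.mul continuous_const)).tendsto 0).mono_left
            nhdsWithin_le_nhds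
        have : rInner y (nv j) + 0 * rInner u (nv j) < c j := by simpa using hj
        exact (hten.eventually_le_const this)
    obtain ⟨ε, hε1, hε2⟩ := (hev.and self_mem_nhdsWithin).exists
    have hx : y + ε • u ∈ X := by
      apply hmem
      intro j
      rw [rInner_add_left, rInner_smul_left]
      exact hε1 j
    have := hw _ hx
    rw [add_sub_cancel_left, rInner_smul_left] at this
    by_contra hcon
    push_neg at hcon
    exact absurd this (not_le.mpr (mul_pos hε2 hcon))
  -- choose δ
  have hδev : ∀ᶠ δ in nhdsWithin (0 : ℝ) (Set.Ioi 0),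
      ∀ j, rInner y (nv j) = c j → j ≠ i₀ →
        rInner v (nv j) - δ * rInner (nv i₀) (nv j) < 0 := by
    rw [Filter.eventually_all]
    intro j
    by_cases hj : rInner y (nv j) = c j ∧ j ≠ i₀
    · have hlt := hvj j hj.1 hj.2
      have hten : Filter.Tendsto
          (fun δ : ℝ => rInner v (nv j) - δ * rInner (nv i₀) (nv j))
          (nhdsWithin (0 : ℝ) (Set.Ioi 0))
          (𝓝 (rInner v (nv j) - 0 * rInner (nv i₀) (nv j))) :=
        ((continuous_const.sub (continuous_id.mul continuous_const)).tendsto 0).mono_left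
          nhdsWithin_le_nhds
      have h0 : rInner v (nv j) - 0 * rInner (nv i₀) (nv j) < 0 := by simpa using hlt
      filter_upwards [hten.eventually_lt_const h0] with δ hδ h1 h2
      exact hδ
    · filter_upwards with δ h1 h2
      exact absurd ⟨h1, h2⟩ hj
  obtain ⟨δ, hδ, hδpos⟩ := (hδev.and self_mem_nhdsWithin).exists
  set s : EuclideanSpace ℂ (Fin n) := v - δ • nv i₀ with hs_def
  have hs_strict : ∀ j, rInner y (nv j) = c j → rInner s (nv j) < 0 := by
    intro j hj
    rw [hs_def, rInner_sub_left, rInner_smul_left]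
    by_cases hji : j = i₀
    · subst hji
      rw [hvi₀, rInner_self]
      have : 0 < δ * ‖nv j‖ ^ 2 := mul_pos hδpos (by positivity)
      linarith
    · exact hδ j hj hji
  have hsw : rInner s w ≤ 0 := hA s hs_strict
  -- rInner v w = 0
  have hvw : rInner v w = 0 := by
    rw [hw_def, rInner, inner_neg_right, inner_smul_right]
    simp only [Complex.neg_re, Complex.mul_re, Complex.I_re, Complex.I_im, zero_mul, one_mul,
      zero_sub, neg_neg]
    exact inner_self_im (𝕜 := ℂ) v
  -- Step C: perp vectors
  have hperp : ∀ u : EuclideanSpace ℂ (Fin n), rInner u (nv i₀) = 0 → rInner u w ≤ 0 := by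
    intro u hu
    have htev : ∀ᶠ t in Filter.atTop,
        ∀ j, rInner y (nv j) = c j → j ≠ i₀ →
          rInner u (nv j) + t * rInner v (nv j) < 0 := by
      rw [Filter.eventually_all]
      intro j
      by_cases hj : rInner y (nv j) = c j ∧ j ≠ i₀
      · have hlt := hvj j hj.1 hj.2
        have hten : Filter.Tendsto (fun t : ℝ => rInner u (nv j) + t * rInner v (nv j))
            Filter.atTop Filter.atBot :=
          Filter.tendsto_atBot_add_const_left _ _
            (Filter.tendsto_id.atTop_mul_const_of_neg hlt)
        filter_upwards [hten.eventually_lt_atBot 0] with t ht h1 h2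
        exact ht
      · filter_upwards with t h1 h2
        exact absurd ⟨h1, h2⟩ hj
    obtain ⟨t, ht⟩ := htev.exists
    have key : ∀ r : ℝ, 0 < r → rInner u w + r * rInner s w ≤ 0 := by
      intro r hr
      have := hA (u + t • v + r • s) ?_
      · rw [rInner_add_left, rInner_add_left, rInner_smul_left, rInner_smul_left, hvw] at this
        linarith
      · intro j hj
        rw [rInner_add_left, rInner_add_left, rInner_smul_left, rInner_smul_left]
        by_cases hji : j = i₀
        · subst hji
          rw [hu, hvi₀]
          have hs0 := hs_strict _ hj
          have : r * rInner s (nv j) < 0 := mul_neg_of_pos_of_neg hr hs0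
          linarith
        · have h1 := ht j hj hji
          have h2 : r * rInner s (nv j) < 0 := mul_neg_of_pos_of_neg hr (hs_strict _ hj)
          linarith
    exact aux_nonpos key
  have hperp' : ∀ u : EuclideanSpace ℂ (Fin n), rInner u (nv i₀) = 0 → rInner u w = 0 := by
    intro u hu
    have h1 := hperp u hu
    have h2 := hperp (-u) (by rw [rInner_neg_left, hu, neg_zero])
    rw [rInner_neg_left] at h2
    linarith
  -- decompose w
  set a : ℝ := rInner w (nv i₀) / ‖nv i₀‖ ^ 2 with ha_def
  have ha_mul : a * ‖nv i₀‖ ^ 2 = rInner w (nv i₀) := by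
    rw [ha_def, div_mul_cancel₀ _ hnpos.ne']
  set u : EuclideanSpace ℂ (Fin n) := w - a • nv i₀ with hu_def
  have hu_perp : rInner u (nv i₀) = 0 := by
    rw [hu_def, rInner_sub_left, rInner_smul_left, rInner_self, ha_mul, sub_self]
  have hu_zero : u = 0 := by
    have h1 : rInner u u = 0 := by
      rw [show rInner u u = rInner u w - a * rInner u (nv i₀) by
        rw [rInner_comm u u]
        rw [hu_def]
        rw [rInner_sub_left, rInner_smul_left, rInner_comm w u, rInner_comm (nv i₀) u]]
      rw [hperp' u hu_perp, hu_perp, mul_zero, sub_zero]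
    rw [rInner_self] at h1
    have : ‖u‖ = 0 := by
      have := sq_eq_zero_iff.mp h1
      simpa using this
    simpa using this
  have hw_eq : w = a • nv i₀ := by
    have := hu_zero
    rw [hu_def, sub_eq_zero] at this
    exact this
  -- a ≥ 0
  have hnw : rInner (nv i₀) w = a * ‖nv i₀‖ ^ 2 := by
    rw [rInner_comm, ha_mul]
  have hsw' : rInner s w = -(δ * (a * ‖nv i₀‖ ^ 2)) := by
    rw [hs_def, rInner_sub_left, rInner_smul_left, hvw, hnw]
    ring
  have ha_nonneg : 0 ≤ a := by
    rw [hsw'] at hsw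
    nlinarith [mul_pos hδpos hnpos]
  refine ⟨a, ha_nonneg, hw_eq, ?_⟩
  intro hv0
  rcases ha_nonneg.lt_or_eq with h | h
  · exact h
  · exfalso
    apply hv0
    have hwz : w = 0 := by rw [hw_eq, ← h, zero_smul]
    have : Complex.I • w = v := by
      rw [hw_def, smul_neg, smul_smul, Complex.I_mul_I, neg_smul, one_smul, neg_neg]
    rw [hwz, smul_zero] at this
    exact this.symm
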